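/- Let α ≥ ω₁ be a regular cardinal and 0 < m < n < ω. Then there exists a quotient prime map g : C⁻(α,n) → C⁻(α,m), i.e., a continuous surjective quotient map with g⁻¹(∞) = {∞}. -/

import Mathlib

universe u v

/-- `CIdx K m` represents the set `αⁿ` for `n = m+1`, where `K` plays the role of `α`. -/
def CIdx (K : Type u) : ℕ → Type u
  | 0 => K
  | m + 1 => K × CIdx K m

/-- Given a subset `U` of `(α × αⁿ) ∪ {∞}` and `ξ`, the set `{x ∈ αⁿ : (ξ,x) ∈ U} ∪ {∞}`. -/
def cslice {K J : Type u} (U : Set (Option (K × J))) (ξ : K) : Set (Option J) :=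
  insert none (Option.some '' {x : J | Option.some (ξ, x) ∈ U})

/-- The openness predicate of the space `C⁻(α, m+1)`. -/
def CIsOpen (K : Type u) : (m : ℕ) → Set (Option (CIdx K m)) → Prop
  | 0, U => none ∈ U → Cardinal.mk ((Option.some ⁻¹' U)ᶜ : Set K) < Cardinal.mk K
  | m + 1, U => none ∈ U →
      Cardinal.mk (({ξ : K | CIsOpen K m (cslice U ξ)}ᶜ : Set K)) < Cardinal.mk K

theorem cslice_mono {K J : Type u} {U V : Set (Option (K × J))} (h : U ⊆ V) (ξ : K) :
    cslice U ξ ⊆ cslice V ξ := by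
  intro z hz
  rcases hz with hz | hz
  · exact Or.inl hz
  · rcases hz with ⟨x, hx, rfl⟩
    exact Or.inr ⟨x, h hx, rfl⟩

theorem none_mem_cslice {K J : Type u} (U : Set (Option (K × J))) (ξ : K) :
    none ∈ cslice U ξ := Set.mem_insert _ _

theorem cisOpen_of_none_not_mem (K : Type u) (m : ℕ) (U : Set (Option (CIdx K m)))
    (h : none ∉ U) : CIsOpen K m U := by
  cases m with
  | zero => exact fun hU => absurd hU h
  | succ m => exact fun hU => absurd hU h

theorem cisOpen_mono (K : Type u) (m : ℕ) :
    ∀ U V : Set (Option (CIdx K m)), CIsOpen K m U → U ⊆ V → (none ∈ V → none ∈ U) →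
      CIsOpen K m V := by
  induction m with
  | zero =>
    intro U V hU hUV hnone hV
    refine lt_of_le_of_lt (Cardinal.mk_le_mk_of_subset ?_) (hU (hnone hV))
    intro k hk hU'
    exact hk (hUV hU')
  | succ m ih =>
    intro U V hU hUV hnone hV
    refine lt_of_le_of_lt (Cardinal.mk_le_mk_of_subset ?_) (hU (hnone hV))
    intro ξ hξ hopen
    exact hξ (ih _ _ hopen (cslice_mono hUV ξ) (fun _ => none_mem_cslice U ξ))

theorem cslice_univ {K J : Type u} (ξ : K) :
    cslice (Set.univ : Set (Option (K × J))) ξ = Set.univ := by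
  ext z
  cases z with
  | none => simp [cslice]
  | some j => simp [cslice]

theorem cisOpen_univ (K : Type u) [Nonempty K] (m : ℕ) : CIsOpen K m Set.univ := by
  cases m with
  | zero =>
    intro _
    have h0 : ((Option.some ⁻¹' (Set.univ : Set (Option K)))ᶜ : Set K) = ∅ := by simp
    show Cardinal.mk ((Option.some ⁻¹' (Set.univ : Set (Option K)))ᶜ : Set K) < Cardinal.mk K
    rw [h0, Cardinal.mk_emptyCollection]
    exact Cardinal.mk_ne_zero K |>.bot_lt
  | succ m =>
    intro _
    have h : ({ξ : K | CIsOpen K m (cslice (Set.univ : Set (Option (CIdx K (m+1)))) ξ)}ᶜ : Set K)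
        = ∅ := by
      ext ξ
      simp only [Set.mem_compl_iff, Set.mem_setOf_eq, Set.mem_empty_iff_false, iff_false, not_not]
      show CIsOpen K m (cslice (Set.univ : Set (Option (K × CIdx K m))) ξ)
      rw [cslice_univ]
      exact cisOpen_univ K m
    rw [h, Cardinal.mk_emptyCollection]
    exact Cardinal.mk_ne_zero K |>.bot_lt

theorem some_mem_cslice_iff {K J : Type u} (U : Set (Option (K × J))) (ξ : K) (x : J) :
    some x ∈ cslice U ξ ↔ some (ξ, x) ∈ U := by
  simp [cslice]

theorem cslice_inter {K J : Type u} (U V : Set (Option (K × J))) (ξ : K) :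
    cslice (U ∩ V) ξ = cslice U ξ ∩ cslice V ξ := by
  ext z
  cases z with
  | none => simp [none_mem_cslice]
  | some x => simp [some_mem_cslice_iff]

theorem cisOpen_inter (K : Type u) [Infinite K] (m : ℕ) :
    ∀ U V : Set (Option (CIdx K m)), CIsOpen K m U → CIsOpen K m V →
      CIsOpen K m (U ∩ V) := by
  induction m with
  | zero =>
    intro U V hU hV h
    have hsub : ((Option.some ⁻¹' (U ∩ V))ᶜ : Set K) ⊆
        (Option.some ⁻¹' U)ᶜ ∪ (Option.some ⁻¹' V)ᶜ := by
      intro k hk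
      by_cases h1 : some k ∈ U
      · by_cases h2 : some k ∈ V
        · exact (hk (And.intro h1 h2)).elim
        · exact Or.inr h2
      · exact Or.inl h1
    refine lt_of_le_of_lt (Cardinal.mk_le_mk_of_subset hsub) ?_
    refine lt_of_le_of_lt (Cardinal.mk_union_le _ _) ?_
    exact Cardinal.add_lt_of_lt (Cardinal.aleph0_le_mk K) (hU h.1) (hV h.2)
  | succ m ih =>
    intro U V hU hV h
    have hsub : ({ξ : K | CIsOpen K m (cslice (U ∩ V) ξ)}ᶜ : Set K) ⊆
        {ξ : K | CIsOpen K m (cslice U ξ)}ᶜ ∪ {ξ : K | CIsOpen K m (cslice V ξ)}ᶜ := by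
      intro ξ hξ
      by_contra hc
      have e : cslice (U ∩ V) ξ = cslice U ξ ∩ cslice V ξ := cslice_inter U V ξ
      have hi : CIsOpen K m (cslice (U ∩ V) ξ) :=
        e ▸ ih _ _ (Classical.byContradiction fun h1 => hc (Or.inl h1))
          (Classical.byContradiction fun h2 => hc (Or.inr h2))
      exact hξ hi
    refine lt_of_le_of_lt (Cardinal.mk_le_mk_of_subset hsub) ?_
    refine lt_of_le_of_lt (Cardinal.mk_union_le _ _) ?_
    exact Cardinal.add_lt_of_lt (Cardinal.aleph0_le_mk K) (hU h.1) (hV h.2)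

theorem cisOpen_sUnion (K : Type u) (m : ℕ) (S : Set (Set (Option (CIdx K m))))
    (hS : ∀ U ∈ S, CIsOpen K m U) : CIsOpen K m (⋃₀ S) := by
  by_cases h : none ∈ ⋃₀ S
  · obtain ⟨U, hUS, hU⟩ := h
    exact cisOpen_mono K m U _ (hS U hUS) (Set.subset_sUnion_of_mem hUS) (fun _ => hU)
  · exact cisOpen_of_none_not_mem _ _ _ h

/-- The space `C⁻(α, m+1)` from the paper (so `m = 0` gives `C(α)` itself);
`K` plays the role of the set of ordinals `< α` and `none` plays the role of `∞`. -/
def CTop (K : Type u) [Infinite K] (m : ℕ) : TopologicalSpace (Option (CIdx K m)) where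
  IsOpen := CIsOpen K m
  isOpen_univ := cisOpen_univ K m
  isOpen_inter := cisOpen_inter K m
  isOpen_sUnion := cisOpen_sUnion K m

instance instCTop (K : Type u) [Infinite K] (m : ℕ) : TopologicalSpace (Option (CIdx K m)) :=
  CTop K m

theorem isOpen_of_none_not_mem (K : Type u) [Infinite K] (m : ℕ)
    (U : Set (Option (CIdx K m))) (h : none ∉ U) : IsOpen U :=
  cisOpen_of_none_not_mem K m U h

theorem exists_drop_map (K : Type u) [Infinite K] (p q : ℕ) (hpq : p ≤ q) :
    ∃ g : Option (CIdx K q) → Option (CIdx K p),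
      Continuous g ∧ Topology.IsQuotientMap g ∧ g ⁻¹' {none} = {none} := by
  induction q with
  | zero =>
    obtain rfl : p = 0 := Nat.le_zero.mp hpq
    exact ⟨id, continuous_id, Topology.IsQuotientMap.id, rfl⟩
  | succ q ih =>
    rcases eq_or_lt_of_le hpq with rfl | h
    · exact ⟨id, continuous_id, Topology.IsQuotientMap.id, rfl⟩
    obtain ⟨g, hg_cont, hg_quot, hg_pre⟩ := ih (Nat.lt_succ_iff.mp h)
    have hg_none : g none = none := by
      have : none ∈ g ⁻¹' {none} := hg_pre ▸ rfl
      simpa using this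
    have hg_some : ∀ x : CIdx K q, g (some x) ≠ none := by
      intro x hx
      have : some x ∈ g ⁻¹' {none} := by simpa using hx
      rw [hg_pre] at this
      simp at this
    set G : Option (CIdx K (q + 1)) → Option (CIdx K p) :=
      fun z => Option.rec none (fun y : CIdx K (q + 1) => g (some y.2)) z with hG
    have hG_none : G none = none := rfl
    have hG_some : ∀ y : CIdx K (q + 1), G (some y) = g (some y.2) := fun _ => rfl
    have key : ∀ U : Set (Option (CIdx K p)), none ∈ U → ∀ ξ : K,
        cslice (G ⁻¹' U) ξ = g ⁻¹' U := by
      intro U hU ξ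
      ext z
      cases z with
      | none =>
        simp only [none_mem_cslice, Set.mem_preimage, hg_none, hU]
      | some x =>
        rw [some_mem_cslice_iff]
        rfl
    have hG_cont : Continuous G := by
      refine continuous_def.mpr fun U hU => ?_
      by_cases hn : none ∈ U
      · intro _
        have hempty : ({ξ : K | CIsOpen K q (cslice (G ⁻¹' U) ξ)}ᶜ : Set K) = ∅ := by
          ext ξ
          simp only [Set.mem_compl_iff, Set.mem_setOf_eq, Set.mem_empty_iff_false, iff_false,
            not_not]
          rw [key U hn ξ]
          exact hg_cont.isOpen_preimage U hU
        refine lt_of_le_of_lt (Cardinal.mk_le_mk_of_subset hempty.le) ?_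
        rw [Cardinal.mk_emptyCollection]
        exact (Cardinal.mk_ne_zero K).bot_lt
      · refine isOpen_of_none_not_mem K (q + 1) _ fun hc => hn ?_
        simpa [hG_none] using hc
    refine ⟨G, hG_cont, ?_, ?_⟩
    · suffices hsuff : Function.Surjective G ∧ ∀ U : Set (Option (CIdx K p)), IsOpen U ↔ IsOpen (G ⁻¹' U) by
        rw [Topology.isQuotientMap_iff]
        exact ⟨.of_isOpen_preimage_iff_isOpen fun s => (hsuff.2 s).symm, hsuff.1⟩
      refine ⟨?_, fun U => ⟨fun hU => hG_cont.isOpen_preimage U hU, fun hV => ?_⟩⟩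
      · intro y
        obtain ⟨z, hz⟩ := hg_quot.surjective y
        cases z with
        | none => exact ⟨none, by rw [hG_none, ← hg_none]; exact hz⟩
        | some x =>
          obtain ⟨ξ⟩ := (inferInstance : Infinite K).nonempty
          exact ⟨some (ξ, x), hz⟩
      · by_cases hn : none ∈ U
        · have hVn : none ∈ G ⁻¹' U := by simpa [hG_none] using hn
          have hcard := hV hVn
          have hex : ∃ ξ : K, CIsOpen K q (cslice (G ⁻¹' U) ξ) := by
            by_contra hc
            push_neg at hc
            have huniv : ({ξ : K | CIsOpen K q (cslice (G ⁻¹' U) ξ)}ᶜ : Set K) = Set.univ := by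
              ext ξ; simpa using hc ξ
            replace hcard := lt_of_le_of_lt (Cardinal.mk_le_mk_of_subset huniv.ge) hcard
            simp at hcard
          obtain ⟨ξ, hξ⟩ := hex
          rw [key U hn ξ] at hξ
          exact hg_quot.isOpen_preimage.mp hξ
        · exact isOpen_of_none_not_mem K p U hn
    · ext z
      cases z with
      | none => simp [hG_none]
      | some y => simpa [hG_some] using hg_some y.2

/-- for a regular cardinal `α ≥ ω₁` (the cardinality of `K`) and `0 < m < n < ω`,
there is a quotient prime map `g : C⁻(α,n) → C⁻(α,m)`.  Here `CTop K p` (the instance topology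
on `Option (CIdx K p)`) is `C⁻(α, p+1)` and `none` is the point `∞`, so the indices `p < q`
below correspond to `m = p+1 < n = q+1`. -/
theorem stmt12 (K : Type u) [Infinite K] (hreg : (Cardinal.mk K).IsRegular)
    (hω1 : Cardinal.aleph 1 ≤ Cardinal.mk K) (p q : ℕ) (hpq : p < q) :
    ∃ g : Option (CIdx K q) → Option (CIdx K p),
      Continuous g ∧ Topology.IsQuotientMap g ∧ g ⁻¹' {none} = {none} := by
  exact exists_drop_map K p q (le_of_lt hpq)
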